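/- Let SF = (A, R_a) be a finitary SETAF (each attacking set B with (B,a) ∈ R_a is finite) and Γ_SF = A ∪ { (⋀B) ↣ a : (B,a) ∈ R_a }. Then I is an equilibrium model of Γ_SF if and only if S_I := { a ∈ A : I ⊨ a } is a stable extension of SF (i.e., S_I = A \ Defeated(S_I) with Defeated(S) = { a : ∃ B ⊆ S, (B,a) ∈ R_a }) and I is the total HT-interpretation with V⁺ = A and V⁻ = Defeated(S_I); moreover this correspondence between equilibrium models and stable extensions is one-to-one. -/
import Mathlib


inductive Formula (Atom : Type) : Type
  | bot : Formula Atom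
  | atom : Atom → Formula Atom
  | sneg : Formula Atom → Formula Atom
  | conj : Formula Atom → Formula Atom → Formula Atom
  | disj : Formula Atom → Formula Atom → Formula Atom
  | impl : Formula Atom → Formula Atom → Formula Atom

structure NelsonInterp (Atom : Type) where
  W : Type
  le : W → W → Prop
  refl : ∀ w, le w w
  trans : ∀ {w₁ w₂ w₃}, le w₁ w₂ → le w₂ w₃ → le w₁ w₃
  Vp : W → Set Atom
  Vm : W → Set Atom
  monoP : ∀ {w w'}, le w w' → Vp w ⊆ Vp w'
  monoM : ∀ {w w'}, le w w' → Vm w ⊆ Vm w'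

mutual
  def forceP {Atom : Type} (I : NelsonInterp Atom) (w : I.W) : Formula Atom → Prop
    | .bot => False
    | .atom a => a ∈ I.Vp w
    | .sneg φ => forceM I w φ
    | .conj φ ψ => forceP I w φ ∧ forceP I w ψ
    | .disj φ ψ => forceP I w φ ∨ forceP I w ψ
    | .impl φ ψ => ∀ w', I.le w w' → (¬ forceP I w' φ ∨ forceP I w' ψ)
  def forceM {Atom : Type} (I : NelsonInterp Atom) (w : I.W) : Formula Atom → Prop
    | .bot => True
    | .atom a => a ∈ I.Vm w
    | .sneg φ => forceP I w φ
    | .conj φ ψ => forceM I w φ ∨ forceM I w ψ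
    | .disj φ ψ => forceM I w φ ∧ forceM I w ψ
    | .impl φ ψ => forceP I w φ ∧ forceM I w ψ
end

def Formula.neg {Atom : Type} (φ : Formula Atom) : Formula Atom := φ.impl .bot

def Formula.supImp {Atom : Type} (φ ψ : Formula Atom) : Formula Atom :=
  ((φ.sneg.neg).conj φ).impl ψ

def Formula.attack {Atom : Type} (φ ψ : Formula Atom) : Formula Atom :=
  φ.supImp ψ.sneg

/-- cw-inference at a world: `I,w ⊨ φ` iff `I,w ⊩⁺ ¬~φ ∧ φ`. -/
def cw {Atom : Type} (I : NelsonInterp Atom) (w : I.W) (φ : Formula Atom) : Prop :=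
  forceP I w ((φ.sneg.neg).conj φ)

/-- `I ⊩⁺ φ` : forcing at all worlds. -/
def forcedP {Atom : Type} (I : NelsonInterp Atom) (φ : Formula Atom) : Prop :=
  ∀ w, forceP I w φ

def forcedM {Atom : Type} (I : NelsonInterp Atom) (φ : Formula Atom) : Prop :=
  ∀ w, forceM I w φ

/-- `I ⊨ φ` : cw-inference at all worlds. -/
def cwAll {Atom : Type} (I : NelsonInterp Atom) (φ : Formula Atom) : Prop :=
  ∀ w, cw I w φ

def NelsonInterp.Consistent {Atom : Type} (I : NelsonInterp Atom) : Prop :=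
  ∀ w, I.Vp w ∩ I.Vm w = ∅

/-- An HT-interpretation: two worlds h ≤ t, given by four sets of atoms. -/
structure HTInterp (Atom : Type) where
  Hp : Set Atom
  Hm : Set Atom
  Tp : Set Atom
  Tm : Set Atom
  subP : Hp ⊆ Tp
  subM : Hm ⊆ Tm

/-- The underlying Nelson interpretation: world `false` is h, world `true` is t. -/
def HTInterp.toNelson {Atom : Type} (I : HTInterp Atom) : NelsonInterp Atom where
  W := Bool
  le := (· ≤ ·)
  refl := le_refl
  trans := le_trans
  Vp := fun w => if w then I.Tp else I.Hp
  Vm := fun w => if w then I.Tm else I.Hm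
  monoP := by
    intro w w' hle
    match w, w', hle with
    | false, false, _ => exact subset_rfl
    | false, true, _ => exact I.subP
    | true, true, _ => exact subset_rfl
    | true, false, h => exact absurd h (by decide)
  monoM := by
    intro w w' hle
    match w, w', hle with
    | false, false, _ => exact subset_rfl
    | false, true, _ => exact I.subM
    | true, true, _ => exact subset_rfl
    | true, false, h => exact absurd h (by decide)


def isHTModel {Atom : Type} (I : HTInterp Atom) (Γ : Set (Formula Atom)) : Prop :=
  ∀ φ ∈ Γ, ∀ w : Bool, forceP I.toNelson w φ

/-- The arguments consistently accepted by `I` among the arguments `A`. -/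
def SI {Atom : Type} (I : HTInterp Atom) (A : Set Atom) : Set Atom :=
  { a ∈ A | cwAll I.toNelson (Formula.atom a) }

/-- `I` is total and a ≤-minimal HT-model among models with the same `t`-valuations. -/
def Equilibrium {Atom : Type} (I : HTInterp Atom) (Γ : Set (Formula Atom)) : Prop :=
  I.Hp = I.Tp ∧ I.Hm = I.Tm ∧ isHTModel I Γ ∧
    ∀ J : HTInterp Atom, J.Tp = I.Tp → J.Tm = I.Tm → isHTModel J Γ →
      J.Hp = I.Tp ∧ J.Hm = I.Tm

/-- Finite conjunction of the atoms in `B` (empty conjunction is `~⊥`, i.e. `⊤`). -/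
noncomputable def bigConj {Atom : Type} (B : Finset Atom) : Formula Atom :=
  B.toList.foldr (fun a φ => (Formula.atom a).conj φ) Formula.bot.sneg

/-- Translation of the SETAF `(A, R_a)`. -/
def ThSF {Atom : Type} (A : Set Atom) (Ra : Finset Atom → Atom → Prop) :
    Set (Formula Atom) :=
  (Formula.atom '' A) ∪
    { f | ∃ B a, Ra B a ∧ f = (bigConj B).attack (Formula.atom a) }

def DefeatedSet {Atom : Type} (Ra : Finset Atom → Atom → Prop) (S : Set Atom) :
    Set Atom :=
  { a | ∃ B : Finset Atom, ↑B ⊆ S ∧ Ra B a }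

lemma forceP_fold {Atom : Type} (N : NelsonInterp Atom) (w : N.W) (l : List Atom) :
    forceP N w (l.foldr (fun a φ => (Formula.atom a).conj φ) Formula.bot.sneg) ↔
      ∀ a ∈ l, a ∈ N.Vp w := by
  induction l with
  | nil => simp [forceP, forceM]
  | cons a l ih => simp [forceP, ih]

lemma forceM_fold {Atom : Type} (N : NelsonInterp Atom) (w : N.W) (l : List Atom) :
    forceM N w (l.foldr (fun a φ => (Formula.atom a).conj φ) Formula.bot.sneg) ↔
      ∃ a ∈ l, a ∈ N.Vm w := by
  induction l with
  | nil => simp [forceM, forceP]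
  | cons a l ih => simp [forceM, ih]

lemma forceP_bigConj {Atom : Type} (N : NelsonInterp Atom) (w : N.W) (B : Finset Atom) :
    forceP N w (bigConj B) ↔ ∀ b ∈ B, b ∈ N.Vp w := by
  simp [bigConj, forceP_fold]

lemma forceM_bigConj {Atom : Type} (N : NelsonInterp Atom) (w : N.W) (B : Finset Atom) :
    forceM N w (bigConj B) ↔ ∃ b ∈ B, b ∈ N.Vm w := by
  simp [bigConj, forceM_fold]

lemma cwAll_atom {Atom : Type} (I : HTInterp Atom) (a : Atom) :
    cwAll I.toNelson (Formula.atom a) ↔ a ∈ I.Hp ∧ a ∉ I.Tm := by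
  constructor
  · intro h
    have h0 := h false
    simp only [cw, forceP, forceM, Formula.neg, HTInterp.toNelson] at h0
    obtain ⟨h1, h2⟩ := h0
    refine ⟨h2, ?_⟩
    have := h1 true (by decide)
    simpa using this
  · rintro ⟨h1, h2⟩ w
    simp only [cw, forceP, forceM, Formula.neg, HTInterp.toNelson]
    constructor
    · intro w' _
      cases w' <;> simp
      · exact fun hm => h2 (I.subM hm)
      · exact h2
    · cases w <;> simp
      · exact h1
      · exact I.subP h1

lemma attack_iff {Atom : Type} (I : HTInterp Atom) (B : Finset Atom) (a : Atom) :
    (∀ w : Bool, forceP I.toNelson w ((bigConj B).attack (Formula.atom a))) ↔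
      (((∀ b ∈ B, b ∈ I.Hp) ∧ (∀ b ∈ B, b ∉ I.Tm)) → a ∈ I.Hm) ∧
      (((∀ b ∈ B, b ∈ I.Tp) ∧ (∀ b ∈ B, b ∉ I.Tm)) → a ∈ I.Tm) := by
  simp only [Formula.attack, Formula.supImp, Formula.neg, forceP, forceM,
    forceP_bigConj, forceM_bigConj]
  constructor
  · intro h
    constructor
    · rintro ⟨hB, hBm⟩
      rcases h false false (le_refl _) with hneg | hmem
      · exfalso
        apply hneg
        refine ⟨fun w'' _ => Or.inl ?_, fun b hb => hB b hb⟩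
        rintro ⟨b, hb, hmb⟩
        cases w''
        · exact hBm b hb (I.subM hmb)
        · exact hBm b hb hmb
      · exact hmem
    · rintro ⟨hB, hBm⟩
      rcases h true true (le_refl _) with hneg | hmem
      · exfalso
        apply hneg
        refine ⟨fun w'' hw'' => Or.inl ?_, fun b hb => hB b hb⟩
        rintro ⟨b, hb, hmb⟩
        cases w''
        · exact absurd hw'' (show ¬((true:Bool) ≤ false) by decide)
        · exact hBm b hb hmb
      · exact hmem
  · rintro ⟨h1, h2⟩ w w' _
    rw [or_iff_not_imp_left, not_not]
    rintro ⟨hneg, hB⟩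
    cases w' with
    | false =>
      have hBm : ∀ b ∈ B, b ∉ I.Tm := by
        intro b hb hmb
        rcases hneg true (show (false:Bool) ≤ true by decide) with h | h
        · exact h ⟨b, hb, hmb⟩
        · exact h
      show a ∈ I.Hm
      exact h1 ⟨fun b hb => hB b hb, hBm⟩
    | true =>
      have hBm : ∀ b ∈ B, b ∉ I.Tm := by
        intro b hb hmb
        rcases hneg true (le_refl _) with h | h
        · exact h ⟨b, hb, hmb⟩
        · exact h
      show a ∈ I.Tm
      exact h2 ⟨fun b hb => hB b hb, hBm⟩

lemma isHTModel_iff {Atom : Type} (A : Set Atom) (Ra : Finset Atom → Atom → Prop)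
    (I : HTInterp Atom) :
    isHTModel I (ThSF A Ra) ↔
      A ⊆ I.Hp ∧ ∀ B a, Ra B a →
        ((((∀ b ∈ B, b ∈ I.Hp) ∧ (∀ b ∈ B, b ∉ I.Tm)) → a ∈ I.Hm) ∧
         (((∀ b ∈ B, b ∈ I.Tp) ∧ (∀ b ∈ B, b ∉ I.Tm)) → a ∈ I.Tm)) := by
  constructor
  · intro h
    constructor
    · intro a ha
      exact h (Formula.atom a) (Or.inl ⟨a, ha, rfl⟩) false
    · intro B a hRa
      exact (attack_iff I B a).mp (h _ (Or.inr ⟨B, a, hRa, rfl⟩))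
  · rintro ⟨hA, hatt⟩ φ hφ w
    rcases hφ with ⟨a, ha, rfl⟩ | ⟨B, a, hRa, rfl⟩
    · cases w
      · exact hA ha
      · exact I.subP (hA ha)
    · exact (attack_iff I B a).mpr (hatt B a hRa) w

lemma SI_eq {Atom : Type} (I : HTInterp Atom) (A : Set Atom) (hA : A ⊆ I.Hp) :
    SI I A = A \ I.Tm := by
  ext a
  simp only [SI, Set.mem_setOf_eq, cwAll_atom, Set.mem_diff]
  exact ⟨fun ⟨h1, _, h3⟩ => ⟨h1, h3⟩, fun ⟨h1, h2⟩ => ⟨h1, hA h1, h2⟩⟩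

theorem setaf_equilibrium_iff_stable {Atom : Type} (A : Set Atom)
    (Ra : Finset Atom → Atom → Prop)
    (hR : ∀ B a, Ra B a → ↑B ⊆ A ∧ a ∈ A) (I : HTInterp Atom) :
    Equilibrium I (ThSF A Ra) ↔
      (SI I A = A \ DefeatedSet Ra (SI I A) ∧
       I.Hp = A ∧ I.Tp = A ∧
       I.Hm = DefeatedSet Ra (SI I A) ∧ I.Tm = DefeatedSet Ra (SI I A)) := by
  constructor
  · rintro ⟨hHT, hHM, hmod, hmin⟩
    obtain ⟨hA, hatt⟩ := (isHTModel_iff A Ra I).mp hmod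
    set S := SI I A with hSdef
    have hS : S = A \ I.Tm := SI_eq I A hA
    set D := DefeatedSet Ra S with hDdef
    have hDT : D ⊆ I.Tm := by
      rintro a ⟨B, hBS, hRa⟩
      refine (hatt B a hRa).2 ⟨fun b hb => ?_, fun b hb => ?_⟩
      · exact hHT ▸ hA (hS ▸ hBS (Finset.mem_coe.mpr hb)).1
      · exact (hS ▸ hBS (Finset.mem_coe.mpr hb)).2
    have hATp : A ⊆ I.Tp := fun a ha => I.subP (hA ha)
    set J : HTInterp Atom := ⟨A, D, I.Tp, I.Tm, hATp, hDT⟩ with hJ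
    have hJmod : isHTModel J (ThSF A Ra) := by
      refine (isHTModel_iff A Ra J).mpr ⟨subset_rfl, fun B a hRa => ⟨?_, ?_⟩⟩
      · rintro ⟨hB, hBm⟩
        exact ⟨B, fun b hb => hS ▸ ⟨hB b (Finset.mem_coe.mp hb), hBm b (Finset.mem_coe.mp hb)⟩, hRa⟩
      · exact (hatt B a hRa).2
    obtain ⟨hJp, hJm⟩ := hmin J rfl rfl hJmod
    -- hJp : A = I.Tp, hJm : D = I.Tm
    have hTpA : I.Tp = A := hJp.symm
    have hTmD : I.Tm = D := hJm.symm
    refine ⟨?_, ?_, hTpA, ?_, hTmD⟩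
    · rw [hS, hTmD]
    · rw [hHT, hTpA]
    · rw [hHM, hTmD]
  · rintro ⟨hstab, hHp, hTp, hHm, hTm⟩
    set S := SI I A with hSdef
    set D := DefeatedSet Ra S with hDdef
    refine ⟨hHp.trans hTp.symm, hHm.trans hTm.symm, ?_, ?_⟩
    · refine (isHTModel_iff A Ra I).mpr ⟨hHp.symm ▸ subset_rfl, fun B a hRa => ⟨?_, ?_⟩⟩
      · rintro ⟨hB, hBm⟩
        rw [hHm]
        refine ⟨B, fun b hb => ?_, hRa⟩
        rw [hstab]
        exact ⟨hHp ▸ hB b (Finset.mem_coe.mp hb), hTm ▸ hBm b (Finset.mem_coe.mp hb)⟩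
      · rintro ⟨hB, hBm⟩
        rw [hTm]
        refine ⟨B, fun b hb => ?_, hRa⟩
        rw [hstab]
        exact ⟨hTp ▸ hB b (Finset.mem_coe.mp hb), hTm ▸ hBm b (Finset.mem_coe.mp hb)⟩
    · intro J hJTp hJTm hJmod
      obtain ⟨hJA, hJatt⟩ := (isHTModel_iff A Ra J).mp hJmod
      have hJHp : J.Hp = A := by
        apply Set.Subset.antisymm
        · calc J.Hp ⊆ J.Tp := J.subP
            _ = A := by rw [hJTp, hTp]
        · exact hJA
      have hJHm : J.Hm = D := by
        apply Set.Subset.antisymm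
        · calc J.Hm ⊆ J.Tm := J.subM
            _ = D := by rw [hJTm, hTm]
        · rintro a ⟨B, hBS, hRa⟩
          refine (hJatt B a hRa).1 ⟨fun b hb => ?_, fun b hb => ?_⟩
          · have hbS := hBS (Finset.mem_coe.mpr hb)
            rw [hstab] at hbS
            exact hJA hbS.1
          · have hbS := hBS (Finset.mem_coe.mpr hb)
            rw [hstab] at hbS
            rw [hJTm, hTm]
            exact hbS.2
      rw [hTp, hTm]
      exact ⟨hJHp, hJHm⟩
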